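/- Let Γ₁ and Γ₂ be finite graphs, each with the property that whenever x ~≃ y ~≃ z ~≃ t, then x ~≃ z or y ~≃ t (where a ~≃ b means a = b or a adjacent to b). Then the strong product Γ₁ ⊠ Γ₂ is a Berge graph, i.e., neither the product nor its complement contains an induced cycle of odd length at least 5. -/

import Mathlib

/-- The strong product of two simple graphs. -/
def strongProd {α β : Type*} (G : SimpleGraph α) (H : SimpleGraph β) :
    SimpleGraph (α × β) where
  Adj x y := x ≠ y ∧ (x.1 = y.1 ∨ G.Adj x.1 y.1) ∧ (x.2 = y.2 ∨ H.Adj x.2 y.2)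
  symm := ⟨fun _ _ ⟨h, h1, h2⟩ => ⟨h.symm, h1.imp Eq.symm (fun a => G.adj_symm a), h2.imp Eq.symm (fun a => H.adj_symm a)⟩⟩
  loopless := ⟨fun _ ⟨h, _⟩ => h rfl⟩

/-- A Berge graph: neither the graph nor its complement contains an induced
odd cycle of length at least five. -/
def IsBerge {V : Type*} (Γ : SimpleGraph V) : Prop :=
  ∀ n : ℕ, 5 ≤ n → Odd n →
    IsEmpty (SimpleGraph.cycleGraph n ↪g Γ) ∧ IsEmpty (SimpleGraph.cycleGraph n ↪g Γᶜ)

open scoped Fin.NatCast Fin.CommRing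

section Aux

lemma finCastNe {m a b : ℕ} (ha : a < m + 5) (hb : b < m + 5) (hab : a ≠ b) :
    ((a : ℕ) : Fin (m + 5)) ≠ ((b : ℕ) : Fin (m + 5)) := by
  intro h
  have h1 : ((a : ℕ) : Fin (m + 5)).val = a := Fin.val_cast_of_lt ha
  have h2 : ((b : ℕ) : Fin (m + 5)).val = b := Fin.val_cast_of_lt hb
  rw [h, h2] at h1
  exact hab h1.symm

lemma fin2ne0 (m : ℕ) : (2 : Fin (m + 5)) ≠ 0 := by
  have := finCastNe (m := m) (a := 2) (b := 0) (by omega) (by omega) (by omega)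
  simpa using this

lemma fin3ne0 (m : ℕ) : (3 : Fin (m + 5)) ≠ 0 := by
  have := finCastNe (m := m) (a := 3) (b := 0) (by omega) (by omega) (by omega)
  simpa using this

lemma fin4ne0 (m : ℕ) : (4 : Fin (m + 5)) ≠ 0 := by
  have := finCastNe (m := m) (a := 4) (b := 0) (by omega) (by omega) (by omega)
  simpa using this

lemma fin2ne1 (m : ℕ) : (2 : Fin (m + 5)) ≠ 1 := by
  have := finCastNe (m := m) (a := 2) (b := 1) (by omega) (by omega) (by omega)
  simpa using this

lemma fin3ne1 (m : ℕ) : (3 : Fin (m + 5)) ≠ 1 := by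
  have := finCastNe (m := m) (a := 3) (b := 1) (by omega) (by omega) (by omega)
  simpa using this

/-- Core parity lemma: no "alternating" predicate around an odd cycle. -/
lemma flipCore {N : ℕ} [NeZero N] (hodd : Odd N) (P : Fin N → Prop)
    (h : ∀ i, P (i + 1) ↔ ¬ P i) : False := by
  have key : ∀ k : ℕ, P ((k : Fin N)) ↔ (if Even k then P 0 else ¬ P 0) := by
    intro k
    induction k with
    | zero => simp
    | succ k ih =>
      have hc : ((k + 1 : ℕ) : Fin N) = ((k : ℕ) : Fin N) + 1 := by push_cast; ring
      rw [hc, h, ih]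
      by_cases hk : Even k
      · simp [hk, Nat.even_add_one]
      · simp [hk, Nat.even_add_one, not_not]
  have hN := key N
  rw [Fin.natCast_self, if_neg (Nat.not_even_iff_odd.mpr hodd)] at hN
  exact iff_not_self hN

lemma cycNotAdj2 (m : ℕ) (i : Fin (m + 5)) :
    ¬ (SimpleGraph.cycleGraph (m + 5)).Adj i (i + 2) := by
  rw [SimpleGraph.cycleGraph_adj]
  rintro (h | h)
  · rw [show i - (i + 2) = -2 from by ring] at h
    have : (3 : Fin (m + 5)) = 0 := by
      rw [show (3 : Fin (m + 5)) = 1 + 2 from by norm_num, ← h]; ring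
    exact fin3ne0 m this
  · have : (2 : Fin (m + 5)) = 1 := by rw [← h]; ring
    exact fin2ne1 m this

lemma cycNotAdj3 (m : ℕ) (i : Fin (m + 5)) :
    ¬ (SimpleGraph.cycleGraph (m + 5)).Adj i (i + 3) := by
  rw [SimpleGraph.cycleGraph_adj]
  rintro (h | h)
  · rw [show i - (i + 3) = -3 from by ring] at h
    have : (4 : Fin (m + 5)) = 0 := by
      rw [show (4 : Fin (m + 5)) = 1 + 3 from by norm_num, ← h]; ring
    exact fin4ne0 m this
  · have : (3 : Fin (m + 5)) = 1 := by rw [← h]; ring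
    exact fin3ne1 m this

lemma cycAdjSucc (m : ℕ) (i : Fin (m + 5)) :
    (SimpleGraph.cycleGraph (m + 5)).Adj i (i + 1) :=
  SimpleGraph.cycleGraph_adj.mpr (Or.inr (add_sub_cancel_left i 1))

end Aux

/-- The strong product of two finite graphs with the chain condition is a Berge graph. -/
theorem strongProd_isBerge {α β : Type*} [Fintype α] [Fintype β]
    (Γ₁ : SimpleGraph α) (Γ₂ : SimpleGraph β)
    (h₁ : ∀ x y z t : α, (x = y ∨ Γ₁.Adj x y) → (y = z ∨ Γ₁.Adj y z) → (z = t ∨ Γ₁.Adj z t) →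
      (x = z ∨ Γ₁.Adj x z) ∨ (y = t ∨ Γ₁.Adj y t))
    (h₂ : ∀ x y z t : β, (x = y ∨ Γ₂.Adj x y) → (y = z ∨ Γ₂.Adj y z) → (z = t ∨ Γ₂.Adj z t) →
      (x = z ∨ Γ₂.Adj x z) ∨ (y = t ∨ Γ₂.Adj y t)) :
    IsBerge (strongProd Γ₁ Γ₂) := by
  intro n hn hodd
  obtain ⟨m, rfl⟩ : ∃ m, n = m + 5 := ⟨n - 5, by omega⟩
  haveI : NeZero (m + 5) := ⟨by omega⟩
  set Γ := strongProd Γ₁ Γ₂ with hΓ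
  constructor
  · -- no odd hole
    constructor
    intro e
    set a : Fin (m + 5) → α := fun i => (e i).1 with ha
    set b : Fin (m + 5) → β := fun i => (e i).2 with hb
    -- adjacency of consecutive vertices
    have hadj : ∀ i : Fin (m + 5), Γ.Adj (e i) (e (i + 1)) :=
      fun i => e.map_rel_iff.mpr (cycAdjSucc m i)
    have ha1 : ∀ i, a i = a (i + 1) ∨ Γ₁.Adj (a i) (a (i + 1)) := fun i => (hadj i : (strongProd Γ₁ Γ₂).Adj _ _).2.1
    have hb1 : ∀ i, b i = b (i + 1) ∨ Γ₂.Adj (b i) (b (i + 1)) := fun i => (hadj i : (strongProd Γ₁ Γ₂).Adj _ _).2.2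
    -- non-adjacency at distance two
    have hnon : ∀ i, ¬ ((a i = a (i + 2) ∨ Γ₁.Adj (a i) (a (i + 2))) ∧
        (b i = b (i + 2) ∨ Γ₂.Adj (b i) (b (i + 2)))) := by
      intro i hc
      have hne : i ≠ i + 2 := fun h => fin2ne0 m (left_eq_add.mp h)
      have : Γ.Adj (e i) (e (i + 2)) := (⟨e.injective.ne hne, hc.1, hc.2⟩ : (strongProd Γ₁ Γ₂).Adj _ _)
      exact cycNotAdj2 m i (e.map_rel_iff.mp this)
    -- chain condition propagation
    have hA : ∀ i, (a i = a (i + 2) ∨ Γ₁.Adj (a i) (a (i + 2))) ∨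
        (a (i + 1) = a (i + 1 + 2) ∨ Γ₁.Adj (a (i + 1)) (a (i + 1 + 2))) := by
      intro i
      have h12 : i + 1 + 2 = i + 3 := by ring
      have h12' : i + 1 + 1 = i + 2 := by ring
      have h12'' : i + 2 + 1 = i + 3 := by ring
      rw [h12]
      have c1 := ha1 i
      have c2 := ha1 (i + 1); rw [h12'] at c2
      have c3 := ha1 (i + 2); rw [h12''] at c3
      exact h₁ _ _ _ _ c1 c2 c3
    have hB : ∀ i, (b i = b (i + 2) ∨ Γ₂.Adj (b i) (b (i + 2))) ∨
        (b (i + 1) = b (i + 1 + 2) ∨ Γ₂.Adj (b (i + 1)) (b (i + 1 + 2))) := by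
      intro i
      have h12 : i + 1 + 2 = i + 3 := by ring
      have h12' : i + 1 + 1 = i + 2 := by ring
      have h12'' : i + 2 + 1 = i + 3 := by ring
      rw [h12]
      have c1 := hb1 i
      have c2 := hb1 (i + 1); rw [h12'] at c2
      have c3 := hb1 (i + 2); rw [h12''] at c3
      exact h₂ _ _ _ _ c1 c2 c3
    refine flipCore hodd (fun i => a i = a (i + 2) ∨ Γ₁.Adj (a i) (a (i + 2))) ?_
    intro i
    constructor
    · intro hP1 hP0
      have hQ0 : ¬ (b i = b (i + 2) ∨ Γ₂.Adj (b i) (b (i + 2))) :=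
        fun hq => hnon i ⟨hP0, hq⟩
      have hQ1 := (hB i).resolve_left hQ0
      exact hnon (i + 1) ⟨hP1, hQ1⟩
    · intro hP0
      exact (hA i).resolve_left hP0
  · -- no odd antihole
    constructor
    intro e
    set a : Fin (m + 5) → α := fun i => (e i).1 with ha
    set b : Fin (m + 5) → β := fun i => (e i).2 with hb
    -- far (non cycle-adjacent, distinct) pairs give product adjacency
    have hfar : ∀ i j : Fin (m + 5), ¬ (SimpleGraph.cycleGraph (m + 5)).Adj i j → i ≠ j →
        Γ.Adj (e i) (e j) := by
      intro i j hna hij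
      have hne : e i ≠ e j := e.injective.ne hij
      have h1 : ¬ Γᶜ.Adj (e i) (e j) := fun h => hna (e.map_rel_iff.mp h)
      rw [SimpleGraph.compl_adj] at h1
      push_neg at h1
      exact h1 hne
    -- near (cycle-adjacent) pairs: not both coordinate-related
    have hnear : ∀ i, ¬ ((a i = a (i + 1) ∨ Γ₁.Adj (a i) (a (i + 1))) ∧
        (b i = b (i + 1) ∨ Γ₂.Adj (b i) (b (i + 1)))) := by
      intro i hc
      have hcadj := e.map_rel_iff.mpr (cycAdjSucc m i)
      rw [SimpleGraph.compl_adj] at hcadj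
      exact hcadj.2 (⟨hcadj.1, hc.1, hc.2⟩ : (strongProd Γ₁ Γ₂).Adj _ _)
    -- index arithmetic facts
    have hne2 : ∀ i : Fin (m + 5), i ≠ i + 2 :=
      fun i h => fin2ne0 m (left_eq_add.mp h)
    have hne3 : ∀ i : Fin (m + 5), i ≠ i + 3 :=
      fun i h => fin3ne0 m (left_eq_add.mp h)
    have hnadj2 : ∀ i : Fin (m + 5), ¬ (SimpleGraph.cycleGraph (m + 5)).Adj (i + 2) i :=
      fun i h => cycNotAdj2 m i h.symm
    -- far adjacency for the three needed pairs
    have far1 : ∀ k : Fin (m + 5), Γ.Adj (e (k + 2)) (e k) :=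
      fun k => hfar (k + 2) k (hnadj2 k) (fun h => hne2 k h.symm)
    have far2 : ∀ k : Fin (m + 5), Γ.Adj (e k) (e (k + 3)) :=
      fun k => hfar k (k + 3) (cycNotAdj3 m k) (hne3 k)
    have far3 : ∀ k : Fin (m + 5), Γ.Adj (e (k + 3)) (e (k + 1)) := by
      intro k
      have h13 : k + 1 + 2 = k + 3 := by ring
      have := hfar (k + 3) (k + 1) ?_ ?_
      · exact this
      · intro h
        rw [← h13] at h
        exact hnadj2 (k + 1) h
      · intro h
        have : k + 1 = k + 3 := h.symm
        have h31 : (1 : Fin (m + 5)) = 3 := add_left_cancel this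
        exact fin3ne1 m h31.symm
    -- chain propagation for first coordinate
    have hA : ∀ k : Fin (m + 5),
        (a (k + 2) = a (k + 2 + 1) ∨ Γ₁.Adj (a (k + 2)) (a (k + 2 + 1))) ∨
        (a k = a (k + 1) ∨ Γ₁.Adj (a k) (a (k + 1))) := by
      intro k
      have h23 : k + 2 + 1 = k + 3 := by ring
      rw [h23]
      exact h₁ _ _ _ _ (far1 k : (strongProd Γ₁ Γ₂).Adj _ _).2.1 (far2 k : (strongProd Γ₁ Γ₂).Adj _ _).2.1 (far3 k : (strongProd Γ₁ Γ₂).Adj _ _).2.1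
    have hB : ∀ k : Fin (m + 5),
        (b (k + 2) = b (k + 2 + 1) ∨ Γ₂.Adj (b (k + 2)) (b (k + 2 + 1))) ∨
        (b k = b (k + 1) ∨ Γ₂.Adj (b k) (b (k + 1))) := by
      intro k
      have h23 : k + 2 + 1 = k + 3 := by ring
      rw [h23]
      exact h₂ _ _ _ _ (far1 k : (strongProd Γ₁ Γ₂).Adj _ _).2.2 (far2 k : (strongProd Γ₁ Γ₂).Adj _ _).2.2 (far3 k : (strongProd Γ₁ Γ₂).Adj _ _).2.2
    have key2 : ∀ k : Fin (m + 5),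
        ((a (k + 2) = a (k + 2 + 1) ∨ Γ₁.Adj (a (k + 2)) (a (k + 2 + 1))) ↔
          ¬ (a k = a (k + 1) ∨ Γ₁.Adj (a k) (a (k + 1)))) := by
      intro k
      constructor
      · intro hP2 hP0
        have hQ0 : ¬ (b k = b (k + 1) ∨ Γ₂.Adj (b k) (b (k + 1))) :=
          fun hq => hnear k ⟨hP0, hq⟩
        have hQ2 := (hB k).resolve_right hQ0
        exact hnear (k + 2) ⟨hP2, hQ2⟩
      · intro hP0
        exact (hA k).resolve_right hP0
    refine flipCore hodd
      (fun j => a (2 * j) = a (2 * j + 1) ∨ Γ₁.Adj (a (2 * j)) (a (2 * j + 1))) ?_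
    intro j
    have h2j : 2 * (j + 1) = 2 * j + 2 := by ring
    have h2j' : 2 * (j + 1) + 1 = 2 * j + 2 + 1 := by ring
    simp only [h2j, h2j']
    exact key2 (2 * j)
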